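/- With the setup of the previous statement (σ-finite W, Q and η(1) < ∞), the function γ ↦ η(γ) on [0,∞) is nondecreasing, finite-valued, continuous, and concave, with left derivative Q({L ≥ γ}) and right derivative Q({L > γ}) at every γ > 0, and η(γ) → ‖W̃‖ (the total mass of the Q-absolutely-continuous part of W) as γ → ∞. -/

import Mathlib

open MeasureTheory Set ENNReal Filter Topology

variable {Ω : Type*} [MeasurableSpace Ω]

/-- The primitive entropy spectrum `η(γ) = ∫ min(dW/dρ, γ·dQ/dρ) dρ`. -/
noncomputable def entSpec (W Q ρ : Measure Ω) (γ : ℝ) : ℝ≥0∞ :=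
  ∫⁻ x, min (W.rnDeriv ρ x) (ENNReal.ofReal γ * Q.rnDeriv ρ x) ∂ρ

namespace EntSpecAux

/-- The entropy spectrum expressed over `Q` with likelihood ratio `L = dW/dQ`. -/
noncomputable def F (W Q : Measure Ω) (γ : ℝ) : ℝ≥0∞ :=
  ∫⁻ x, min (W.rnDeriv Q x) (ENNReal.ofReal γ) ∂Q

variable (W Q : Measure Ω)

lemma F_mono : Monotone (F W Q) := fun a b hab =>
  lintegral_mono fun x => min_le_min le_rfl (ENNReal.ofReal_le_ofReal hab)

variable [SigmaFinite W] [SigmaFinite Q]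

lemma entSpec_eq_F (ρ : Measure Ω) [SigmaFinite ρ] (hQ : Q ≪ ρ) (γ : ℝ) :
    entSpec W Q ρ γ = F W Q γ := by
  have hb : Measurable (Q.rnDeriv ρ) := Measure.measurable_rnDeriv _ _
  have hL : Measurable (W.rnDeriv Q) := Measure.measurable_rnDeriv _ _
  have hmul0 : W.rnDeriv Q * Q.rnDeriv ρ =ᵐ[Q] W.rnDeriv ρ := Measure.rnDeriv_mul_rnDeriv' hQ
  have hmul' : ∀ᵐ x ∂(ρ.withDensity (Q.rnDeriv ρ)),
      (W.rnDeriv Q * Q.rnDeriv ρ) x = W.rnDeriv ρ x := by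
    rw [Measure.withDensity_rnDeriv_eq Q ρ hQ]; exact hmul0
  have hmul : ∀ᵐ x ∂ρ, Q.rnDeriv ρ x ≠ 0 →
      (W.rnDeriv Q * Q.rnDeriv ρ) x = W.rnDeriv ρ x := (ae_withDensity_iff hb).1 hmul'
  simp only [Pi.mul_apply] at hmul
  have key : (fun x => min (W.rnDeriv ρ x) (ENNReal.ofReal γ * Q.rnDeriv ρ x))
      =ᵐ[ρ] fun x => Q.rnDeriv ρ x * min (W.rnDeriv Q x) (ENNReal.ofReal γ) := by
    filter_upwards [hmul] with x hx
    by_cases hbx : Q.rnDeriv ρ x = 0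
    · simp [hbx]
    · rw [← hx hbx, min_mul_mul_right, mul_comm]
  have h2 : ∫⁻ x, min (W.rnDeriv Q x) (ENNReal.ofReal γ) ∂(ρ.withDensity (Q.rnDeriv ρ))
      = ∫⁻ x, Q.rnDeriv ρ x * min (W.rnDeriv Q x) (ENNReal.ofReal γ) ∂ρ :=
    lintegral_withDensity_eq_lintegral_mul ρ hb (hL.min measurable_const)
  rw [Measure.withDensity_rnDeriv_eq Q ρ hQ] at h2
  calc entSpec W Q ρ γ
      = ∫⁻ x, Q.rnDeriv ρ x * min (W.rnDeriv Q x) (ENNReal.ofReal γ) ∂ρ :=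
        lintegral_congr_ae key
    _ = F W Q γ := h2.symm

lemma F_ne_top (h1 : F W Q 1 ≠ ⊤) (γ : ℝ) : F W Q γ ≠ ⊤ := by
  have hL : Measurable (W.rnDeriv Q) := Measure.measurable_rnDeriv _ _
  rcases le_or_gt γ 1 with h | h
  · exact ne_top_of_le_ne_top h1 (F_mono W Q h)
  · have hγ1 : (1 : ℝ≥0∞) ≤ ENNReal.ofReal γ := ENNReal.one_le_ofReal.2 h.le
    have hle : F W Q γ ≤ ENNReal.ofReal γ * F W Q 1 := by
      rw [F, F, ENNReal.ofReal_one, ← lintegral_const_mul _ (hL.min measurable_const)]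
      refine lintegral_mono fun x => ?_
      rcases le_total (W.rnDeriv Q x) 1 with hx | hx
      · calc min (W.rnDeriv Q x) (ENNReal.ofReal γ) ≤ W.rnDeriv Q x := min_le_left _ _
          _ = 1 * W.rnDeriv Q x := (one_mul _).symm
          _ ≤ ENNReal.ofReal γ * min (W.rnDeriv Q x) 1 := by
              rw [min_eq_left hx]; exact mul_le_mul' hγ1 le_rfl
      · calc min (W.rnDeriv Q x) (ENNReal.ofReal γ) ≤ ENNReal.ofReal γ := min_le_right _ _
          _ = ENNReal.ofReal γ * 1 := (mul_one _).symm
          _ = ENNReal.ofReal γ * min (W.rnDeriv Q x) 1 := by rw [min_eq_right hx]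
    exact ne_top_of_le_ne_top (ENNReal.mul_ne_top ENNReal.ofReal_ne_top h1) hle

lemma tail_ne_top (h1 : F W Q 1 ≠ ⊤) {s : ℝ} (hs : 0 < s) :
    Q {x | ENNReal.ofReal s ≤ W.rnDeriv Q x} ≠ ⊤ := by
  have hL : Measurable (W.rnDeriv Q) := Measure.measurable_rnDeriv _ _
  have hSm : MeasurableSet {x | ENNReal.ofReal s ≤ W.rnDeriv Q x} :=
    measurableSet_le measurable_const hL
  have hle : min (ENNReal.ofReal s) 1 * Q {x | ENNReal.ofReal s ≤ W.rnDeriv Q x} ≤ F W Q 1 := by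
    calc min (ENNReal.ofReal s) 1 * Q {x | ENNReal.ofReal s ≤ W.rnDeriv Q x}
        = ∫⁻ _ in {x | ENNReal.ofReal s ≤ W.rnDeriv Q x}, min (ENNReal.ofReal s) 1 ∂Q := by
          rw [setLIntegral_const]
      _ ≤ ∫⁻ x in {x | ENNReal.ofReal s ≤ W.rnDeriv Q x}, min (W.rnDeriv Q x) 1 ∂Q :=
          setLIntegral_mono (hL.min measurable_const) fun x hx => min_le_min hx le_rfl
      _ ≤ ∫⁻ x, min (W.rnDeriv Q x) 1 ∂Q := setLIntegral_le_lintegral _ _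
      _ = F W Q 1 := by rw [F, ENNReal.ofReal_one]
  intro htop
  rw [htop, ENNReal.mul_top (lt_min (ENNReal.ofReal_pos.2 hs) zero_lt_one).ne'] at hle
  exact h1 (top_le_iff.mp hle)

lemma tail_lt_ne_top (h1 : F W Q 1 ≠ ⊤) {s : ℝ} (hs : 0 < s) :
    Q {x | ENNReal.ofReal s < W.rnDeriv Q x} ≠ ⊤ :=
  ne_top_of_le_ne_top (tail_ne_top W Q h1 hs) (measure_mono fun x hx => show ENNReal.ofReal _ ≤ W.rnDeriv Q x from le_of_lt hx)

lemma F_le {y γ : ℝ} (hy : 0 ≤ y) (hyγ : y ≤ γ) :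
    F W Q γ ≤ F W Q y
      + ENNReal.ofReal (γ - y) * Q {x | ENNReal.ofReal y < W.rnDeriv Q x} := by
  have hL : Measurable (W.rnDeriv Q) := Measure.measurable_rnDeriv _ _
  have hSm : MeasurableSet {x | ENNReal.ofReal y < W.rnDeriv Q x} :=
    measurableSet_lt measurable_const hL
  calc F W Q γ
      ≤ ∫⁻ x, (min (W.rnDeriv Q x) (ENNReal.ofReal y)
          + {x | ENNReal.ofReal y < W.rnDeriv Q x}.indicator
              (fun _ => ENNReal.ofReal (γ - y)) x) ∂Q := by
        refine lintegral_mono fun x => ?_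
        by_cases hx : x ∈ {x | ENNReal.ofReal y < W.rnDeriv Q x}
        · rw [indicator_of_mem hx, min_eq_right (show ENNReal.ofReal y ≤ W.rnDeriv Q x from le_of_lt hx),
            ← ENNReal.ofReal_add hy (sub_nonneg.2 hyγ)]
          calc min (W.rnDeriv Q x) (ENNReal.ofReal γ) ≤ ENNReal.ofReal γ := min_le_right _ _
            _ = ENNReal.ofReal (y + (γ - y)) := by ring_nf
        · rw [indicator_of_notMem hx, add_zero]
          have hx' : W.rnDeriv Q x ≤ ENNReal.ofReal y := not_lt.1 hx
          rw [min_eq_left hx', min_eq_left (hx'.trans (ENNReal.ofReal_le_ofReal hyγ))]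
    _ = F W Q y + ENNReal.ofReal (γ - y) * Q {x | ENNReal.ofReal y < W.rnDeriv Q x} := by
        rw [lintegral_add_right _ (measurable_const.indicator hSm),
          lintegral_indicator_const hSm, F]

lemma le_F {y γ : ℝ} (hy : 0 ≤ y) (hyγ : y ≤ γ) :
    F W Q y + ENNReal.ofReal (γ - y) * Q {x | ENNReal.ofReal γ ≤ W.rnDeriv Q x}
      ≤ F W Q γ := by
  have hL : Measurable (W.rnDeriv Q) := Measure.measurable_rnDeriv _ _
  have hSm : MeasurableSet {x | ENNReal.ofReal γ ≤ W.rnDeriv Q x} :=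
    measurableSet_le measurable_const hL
  calc F W Q y + ENNReal.ofReal (γ - y) * Q {x | ENNReal.ofReal γ ≤ W.rnDeriv Q x}
      = ∫⁻ x, (min (W.rnDeriv Q x) (ENNReal.ofReal y)
          + {x | ENNReal.ofReal γ ≤ W.rnDeriv Q x}.indicator
              (fun _ => ENNReal.ofReal (γ - y)) x) ∂Q := by
        rw [lintegral_add_right _ (measurable_const.indicator hSm),
          lintegral_indicator_const hSm, F]
    _ ≤ F W Q γ := by
        refine lintegral_mono fun x => ?_
        by_cases hx : x ∈ {x | ENNReal.ofReal γ ≤ W.rnDeriv Q x}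
        · have hx' : ENNReal.ofReal γ ≤ W.rnDeriv Q x := hx
          rw [indicator_of_mem hx, min_eq_right hx', min_eq_right
            ((ENNReal.ofReal_le_ofReal hyγ).trans hx'), ← ENNReal.ofReal_add hy (sub_nonneg.2 hyγ)]
          apply le_of_eq; congr 1; ring
        · rw [indicator_of_notMem hx, add_zero]
          exact min_le_min le_rfl (ENNReal.ofReal_le_ofReal hyγ)

lemma tendsto_tail_left (h1 : F W Q 1 ≠ ⊤) {γ : ℝ} (hγ : 0 < γ) :
    Tendsto (fun y : ℝ => Q {x | ENNReal.ofReal y < W.rnDeriv Q x}) (𝓝[<] γ)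
      (𝓝 (Q {x | ENNReal.ofReal γ ≤ W.rnDeriv Q x})) := by
  have hL : Measurable (W.rnDeriv Q) := Measure.measurable_rnDeriv W Q
  rw [tendsto_order]
  constructor
  · intro b hb
    filter_upwards [self_mem_nhdsWithin] with y (hy : y < γ)
    refine lt_of_lt_of_le hb (measure_mono fun x hx => ?_)
    exact lt_of_lt_of_le ((ENNReal.ofReal_lt_ofReal_iff hγ).2 hy) hx
  · intro b hb
    set yseq : ℕ → ℝ := fun n => γ - γ / (n + 2) with hyseq
    have hy_pos : ∀ n : ℕ, 0 < yseq n := by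
      intro n
      have h2 : γ / ((n : ℝ) + 2) < γ := div_lt_self hγ (by have := n.cast_nonneg (α := ℝ); linarith)
      simp only [hyseq]
      linarith
    have hy_lt : ∀ n : ℕ, yseq n < γ := by
      intro n
      have : 0 < γ / ((n : ℝ) + 2) := by positivity
      simp only [hyseq]
      linarith
    have hy_mono : Monotone yseq := by
      intro m n hmn
      simp only [hyseq]
      have : γ / ((n : ℝ) + 2) ≤ γ / ((m : ℝ) + 2) := by
        gcongr <;> first | positivity | exact_mod_cast hmn | linarith
      linarith
    have hinter : (⋂ n : ℕ, {x | ENNReal.ofReal (yseq n) < W.rnDeriv Q x})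
        = {x | ENNReal.ofReal γ ≤ W.rnDeriv Q x} := by
      ext x
      simp only [mem_iInter, mem_setOf_eq]
      constructor
      · intro h
        by_contra hcon
        push_neg at hcon
        have hxne : W.rnDeriv Q x ≠ ⊤ := hcon.ne_top
        have ht : (W.rnDeriv Q x).toReal < γ := (ENNReal.lt_ofReal_iff_toReal_lt hxne).1 hcon
        set t := (W.rnDeriv Q x).toReal with htdef
        have ht0 : 0 ≤ t := ENNReal.toReal_nonneg
        obtain ⟨n, hn⟩ := exists_nat_one_div_lt (div_pos (show (0:ℝ) < γ - t by linarith) hγ)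
        have hB : γ * (1 / ((n : ℝ) + 1)) < γ - t := by
          have := mul_lt_mul_of_pos_left hn hγ
          rwa [mul_div_cancel₀ _ hγ.ne'] at this
        have hA : γ / ((n : ℝ) + 2) ≤ γ / ((n : ℝ) + 1) := by
          gcongr <;> first | positivity | linarith
        have h4 : t < yseq n := by
          simp only [hyseq]
          rw [mul_one_div] at hB
          linarith
        have hlt : W.rnDeriv Q x < ENNReal.ofReal (yseq n) := by
          rw [← ENNReal.ofReal_toReal hxne]
          exact (ENNReal.ofReal_lt_ofReal_iff (hy_pos n)).2 h4
        exact absurd (h n) (not_lt.2 hlt.le)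
      · intro h n
        exact lt_of_lt_of_le ((ENNReal.ofReal_lt_ofReal_iff hγ).2 (hy_lt n)) h
    have hmeas : ∀ n : ℕ,
        NullMeasurableSet {x | ENNReal.ofReal (yseq n) < W.rnDeriv Q x} Q :=
      fun n => (measurableSet_lt measurable_const hL).nullMeasurableSet
    have hanti : Antitone fun n : ℕ => {x | ENNReal.ofReal (yseq n) < W.rnDeriv Q x} := by
      intro m n hmn x hx
      simp only [mem_setOf_eq] at hx ⊢
      exact lt_of_le_of_lt (ENNReal.ofReal_le_ofReal (hy_mono hmn)) hx
    have hfin : ∃ n, Q {x | ENNReal.ofReal (yseq n) < W.rnDeriv Q x} ≠ ⊤ :=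
      ⟨0, tail_lt_ne_top W Q h1 (hy_pos 0)⟩
    have hiInf := Directed.measure_iInter hmeas hanti.directed_ge hfin
    rw [hinter] at hiInf
    have hex : ∃ n : ℕ, Q {x | ENNReal.ofReal (yseq n) < W.rnDeriv Q x} < b := by
      rw [← iInf_lt_iff, ← hiInf]
      exact hb
    obtain ⟨n, hn⟩ := hex
    filter_upwards [Ioo_mem_nhdsLT_of_mem
      (show γ ∈ Ioc (yseq n) γ from ⟨hy_lt n, le_refl γ⟩)] with y hy
    refine lt_of_le_of_lt (measure_mono fun x hx => ?_) hn
    exact lt_of_le_of_lt (ENNReal.ofReal_le_ofReal hy.1.le) hx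

lemma tendsto_tail_right {γ : ℝ} (hγ : 0 < γ) :
    Tendsto (fun y : ℝ => Q {x | ENNReal.ofReal y ≤ W.rnDeriv Q x}) (𝓝[>] γ)
      (𝓝 (Q {x | ENNReal.ofReal γ < W.rnDeriv Q x})) := by
  have hL : Measurable (W.rnDeriv Q) := Measure.measurable_rnDeriv W Q
  rw [tendsto_order]
  constructor
  · intro b hb
    set yseq : ℕ → ℝ := fun n => γ + 1 / (n + 1) with hyseq
    have hy_gt : ∀ n : ℕ, γ < yseq n := by
      intro n
      have : 0 < 1 / ((n : ℝ) + 1) := by positivity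
      simp only [hyseq]
      linarith
    have hy_anti : Antitone yseq := by
      intro m n hmn
      simp only [hyseq]
      have : 1 / ((n : ℝ) + 1) ≤ 1 / ((m : ℝ) + 1) := by
        gcongr <;> first | positivity | exact_mod_cast hmn | linarith
      linarith
    have hdir : Directed (· ⊆ ·)
        (fun n : ℕ => {x | ENNReal.ofReal (yseq n) ≤ W.rnDeriv Q x}) := by
      refine Monotone.directed_le fun m n hmn x hx => ?_
      simp only [mem_setOf_eq] at hx ⊢
      exact le_trans (ENNReal.ofReal_le_ofReal (hy_anti hmn)) hx
    have hunion : (⋃ n : ℕ, {x | ENNReal.ofReal (yseq n) ≤ W.rnDeriv Q x})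
        = {x | ENNReal.ofReal γ < W.rnDeriv Q x} := by
      ext x
      simp only [mem_iUnion, mem_setOf_eq]
      constructor
      · rintro ⟨n, hn⟩
        exact lt_of_lt_of_le ((ENNReal.ofReal_lt_ofReal_iff (hγ.trans (hy_gt n))).2 (hy_gt n)) hn
      · intro h
        obtain ⟨r, hr0, hr1, hr2⟩ := ENNReal.lt_iff_exists_real_btwn.1 h
        have hγr : γ < r := (ENNReal.ofReal_lt_ofReal_iff'.1 hr1).1
        obtain ⟨n, hn⟩ := exists_nat_one_div_lt (show 0 < r - γ by linarith)
        exact ⟨n, le_trans (ENNReal.ofReal_le_ofReal (by simp only [hyseq]; linarith)) hr2.le⟩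
    have hiSup := Directed.measure_iUnion (μ := Q) hdir
    rw [hunion] at hiSup
    have hex : ∃ n : ℕ, b < Q {x | ENNReal.ofReal (yseq n) ≤ W.rnDeriv Q x} := by
      rw [← lt_iSup_iff, ← hiSup]
      exact hb
    obtain ⟨n, hn⟩ := hex
    filter_upwards [Ioo_mem_nhdsGT_of_mem
      (show γ ∈ Ico γ (yseq n) from ⟨le_refl γ, hy_gt n⟩)] with y hy
    refine lt_of_lt_of_le hn (measure_mono fun x hx => ?_)
    exact le_trans (ENNReal.ofReal_le_ofReal hy.2.le) hx
  · intro b hb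
    filter_upwards [self_mem_nhdsWithin] with y (hy : γ < y)
    refine lt_of_le_of_lt (measure_mono fun x hx => ?_) hb
    exact lt_of_lt_of_le ((ENNReal.ofReal_lt_ofReal_iff (hγ.trans hy)).2 hy) hx

lemma hasDerivWithinAt_F_Iio (h1 : F W Q 1 ≠ ⊤) {γ : ℝ} (hγ : 0 < γ) :
    HasDerivWithinAt (fun y => (F W Q y).toReal)
      ((Q {x | ENNReal.ofReal γ ≤ W.rnDeriv Q x}).toReal) (Iio γ) γ := by
  have hDfin : Q {x | ENNReal.ofReal γ ≤ W.rnDeriv Q x} ≠ ⊤ := tail_ne_top W Q h1 hγ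
  rw [hasDerivWithinAt_iff_tendsto_slope' (notMem_Iio.2 le_rfl)]
  have hupper : Tendsto (fun y : ℝ => (Q {x | ENNReal.ofReal y < W.rnDeriv Q x}).toReal)
      (𝓝[<] γ) (𝓝 (Q {x | ENNReal.ofReal γ ≤ W.rnDeriv Q x}).toReal) :=
    (ENNReal.tendsto_toReal hDfin).comp (tendsto_tail_left W Q h1 hγ)
  refine tendsto_of_tendsto_of_tendsto_of_le_of_le' tendsto_const_nhds hupper ?_ ?_
  · filter_upwards [Ioo_mem_nhdsLT_of_mem (show γ ∈ Ioc 0 γ from ⟨hγ, le_refl _⟩)] with y hy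
    have hkey := le_F W Q hy.1.le hy.2.le
    have hyf := F_ne_top W Q h1 y
    have hγf := F_ne_top W Q h1 γ
    have hto := ENNReal.toReal_mono hγf hkey
    rw [ENNReal.toReal_add hyf (ENNReal.mul_ne_top ENNReal.ofReal_ne_top hDfin),
      ENNReal.toReal_mul, ENNReal.toReal_ofReal (sub_nonneg.2 hy.2.le)] at hto
    rw [slope_comm, slope_def_field, le_div_iff₀ (sub_pos.2 hy.2)]
    linarith
  · filter_upwards [Ioo_mem_nhdsLT_of_mem (show γ ∈ Ioc 0 γ from ⟨hγ, le_refl _⟩)] with y hy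
    have hkey := F_le W Q hy.1.le hy.2.le
    have hyf := F_ne_top W Q h1 y
    have hγf := F_ne_top W Q h1 γ
    have hQy : Q {x | ENNReal.ofReal y < W.rnDeriv Q x} ≠ ⊤ := tail_lt_ne_top W Q h1 hy.1
    have hto := ENNReal.toReal_mono
      (ENNReal.add_ne_top.2 ⟨hyf, ENNReal.mul_ne_top ENNReal.ofReal_ne_top hQy⟩) hkey
    rw [ENNReal.toReal_add hyf (ENNReal.mul_ne_top ENNReal.ofReal_ne_top hQy),
      ENNReal.toReal_mul, ENNReal.toReal_ofReal (sub_nonneg.2 hy.2.le)] at hto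
    rw [slope_comm, slope_def_field, div_le_iff₀ (sub_pos.2 hy.2)]
    linarith

lemma hasDerivWithinAt_F_Ioi (h1 : F W Q 1 ≠ ⊤) {γ : ℝ} (hγ : 0 < γ) :
    HasDerivWithinAt (fun y => (F W Q y).toReal)
      ((Q {x | ENNReal.ofReal γ < W.rnDeriv Q x}).toReal) (Ioi γ) γ := by
  have hUfin : Q {x | ENNReal.ofReal γ < W.rnDeriv Q x} ≠ ⊤ := tail_lt_ne_top W Q h1 hγ
  rw [hasDerivWithinAt_iff_tendsto_slope' (notMem_Ioi.2 le_rfl)]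
  have hlower : Tendsto (fun y : ℝ => (Q {x | ENNReal.ofReal y ≤ W.rnDeriv Q x}).toReal)
      (𝓝[>] γ) (𝓝 (Q {x | ENNReal.ofReal γ < W.rnDeriv Q x}).toReal) :=
    (ENNReal.tendsto_toReal hUfin).comp (tendsto_tail_right W Q hγ)
  refine tendsto_of_tendsto_of_tendsto_of_le_of_le' hlower tendsto_const_nhds ?_ ?_
  · filter_upwards [Ioo_mem_nhdsGT_of_mem
      (show γ ∈ Ico γ (γ + 1) from ⟨le_refl _, by linarith⟩)] with y hy
    have hkey := le_F W Q hγ.le hy.1.le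
    have hyf := F_ne_top W Q h1 y
    have hγf := F_ne_top W Q h1 γ
    have hQy : Q {x | ENNReal.ofReal y ≤ W.rnDeriv Q x} ≠ ⊤ :=
      tail_ne_top W Q h1 (hγ.trans hy.1)
    have hto := ENNReal.toReal_mono hyf hkey
    rw [ENNReal.toReal_add hγf (ENNReal.mul_ne_top ENNReal.ofReal_ne_top hQy),
      ENNReal.toReal_mul, ENNReal.toReal_ofReal (sub_nonneg.2 hy.1.le)] at hto
    rw [slope_def_field, le_div_iff₀ (sub_pos.2 hy.1)]
    linarith
  · filter_upwards [Ioo_mem_nhdsGT_of_mem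
      (show γ ∈ Ico γ (γ + 1) from ⟨le_refl _, by linarith⟩)] with y hy
    have hkey := F_le W Q hγ.le hy.1.le
    have hyf := F_ne_top W Q h1 y
    have hγf := F_ne_top W Q h1 γ
    have hto := ENNReal.toReal_mono
      (ENNReal.add_ne_top.2 ⟨hγf, ENNReal.mul_ne_top ENNReal.ofReal_ne_top hUfin⟩) hkey
    rw [ENNReal.toReal_add hγf (ENNReal.mul_ne_top ENNReal.ofReal_ne_top hUfin),
      ENNReal.toReal_mul, ENNReal.toReal_ofReal (sub_nonneg.2 hy.1.le)] at hto
    rw [slope_def_field, div_le_iff₀ (sub_pos.2 hy.1)]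
    linarith

lemma F_zero : F W Q 0 = 0 := by
  have h : ∀ x, min (W.rnDeriv Q x) (ENNReal.ofReal 0) = 0 := fun x => by
    rw [ENNReal.ofReal_zero]
    exact min_eq_right zero_le
  simp [F, h]

lemma tendsto_F_zero (h1 : F W Q 1 ≠ ⊤) :
    Tendsto (F W Q) (𝓝[≥] (0:ℝ)) (𝓝 0) := by
  have hL : Measurable (W.rnDeriv Q) := Measure.measurable_rnDeriv W Q
  rw [ENNReal.tendsto_nhds_zero]
  intro ε hε
  have hinf : (⨅ n : ℕ, F W Q (1 / (n + 1))) = 0 := by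
    have hmeasn : ∀ n : ℕ,
        Measurable fun x => min (W.rnDeriv Q x) (ENNReal.ofReal (1 / ((n : ℝ) + 1))) :=
      fun n => hL.min measurable_const
    have hanti : Antitone fun n : ℕ =>
        fun x => min (W.rnDeriv Q x) (ENNReal.ofReal (1 / ((n : ℝ) + 1))) := by
      intro m n hmn
      intro x
      refine min_le_min le_rfl (ENNReal.ofReal_le_ofReal ?_)
      gcongr <;> first | positivity | exact_mod_cast hmn | linarith
    have h0fin : ∫⁻ x, min (W.rnDeriv Q x) (ENNReal.ofReal (1 / ((0 : ℕ) + 1 : ℝ))) ∂Q ≠ ⊤ := by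
      have : ((1:ℝ) / ((0 : ℕ) + 1 : ℝ)) = 1 := by norm_num
      rw [this]
      exact F_ne_top W Q h1 1
    have hswap := lintegral_iInf hmeasn hanti h0fin
    have hc : (⨅ n : ℕ, ENNReal.ofReal (1 / ((n : ℝ) + 1))) = 0 := by
      have htd : Tendsto (fun n : ℕ => ENNReal.ofReal (1 / ((n : ℝ) + 1))) atTop (𝓝 0) := by
        have := ENNReal.tendsto_ofReal (tendsto_one_div_add_atTop_nhds_zero_nat)
        simpa using this
      have hanti' : Antitone fun n : ℕ => ENNReal.ofReal (1 / ((n : ℝ) + 1)) := by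
        intro m n hmn
        refine ENNReal.ofReal_le_ofReal ?_
        gcongr <;> first | positivity | exact_mod_cast hmn | linarith
      exact tendsto_nhds_unique (tendsto_atTop_iInf hanti') htd
    have hptz : ∀ x, (⨅ n : ℕ, min (W.rnDeriv Q x) (ENNReal.ofReal (1 / ((n : ℝ) + 1)))) = 0 := by
      intro x
      refine le_antisymm ?_ zero_le
      calc (⨅ n : ℕ, min (W.rnDeriv Q x) (ENNReal.ofReal (1 / ((n : ℝ) + 1))))
          ≤ ⨅ n : ℕ, ENNReal.ofReal (1 / ((n : ℝ) + 1)) := iInf_mono fun n => min_le_right _ _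
        _ = 0 := hc
    have hlhs : ∫⁻ x, ⨅ n : ℕ, min (W.rnDeriv Q x) (ENNReal.ofReal (1 / ((n : ℝ) + 1))) ∂Q = 0 := by
      simp only [hptz, lintegral_zero]
    rw [hlhs] at hswap
    exact hswap.symm
  have hlt : (⨅ n : ℕ, F W Q (1 / (n + 1))) < ε := by
    rw [hinf]
    exact hε
  obtain ⟨n, hn⟩ := iInf_lt_iff.1 hlt
  filter_upwards [Ico_mem_nhdsGE
    (show (0:ℝ) < 1 / ((n : ℝ) + 1) by positivity)] with y hy
  exact le_trans (F_mono W Q hy.2.le) hn.le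

lemma F_iSup : (⨆ γ : ℝ, F W Q γ) = Q.withDensity (W.rnDeriv Q) Set.univ := by
  have hL : Measurable (W.rnDeriv Q) := Measure.measurable_rnDeriv W Q
  have hT : Q.withDensity (W.rnDeriv Q) Set.univ = ∫⁻ x, W.rnDeriv Q x ∂Q := by
    rw [withDensity_apply _ MeasurableSet.univ, setLIntegral_univ]
  have hsup : ∀ x, (⨆ n : ℕ, min (W.rnDeriv Q x) (ENNReal.ofReal (n : ℝ)))
      = W.rnDeriv Q x := by
    intro x
    refine le_antisymm (iSup_le fun n => min_le_left _ _) ?_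
    rcases eq_or_ne (W.rnDeriv Q x) ⊤ with h | h
    · rw [h]
      have hmin : ∀ n : ℕ, min (⊤ : ℝ≥0∞) (ENNReal.ofReal (n : ℝ)) = ENNReal.ofReal (n : ℝ) :=
        fun n => min_eq_right le_top
      calc (⊤ : ℝ≥0∞) = ⨆ n : ℕ, ENNReal.ofReal (n : ℝ) := by
            simp only [ENNReal.ofReal_natCast]
            exact ENNReal.iSup_natCast.symm
        _ = ⨆ n : ℕ, min (⊤ : ℝ≥0∞) (ENNReal.ofReal (n : ℝ)) := by
            simp only [hmin]
        _ ≤ ⨆ n : ℕ, min (⊤ : ℝ≥0∞) (ENNReal.ofReal (n : ℝ)) := le_rfl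
    · obtain ⟨n, hn⟩ := exists_nat_ge (W.rnDeriv Q x).toReal
      have hle : W.rnDeriv Q x ≤ min (W.rnDeriv Q x) (ENNReal.ofReal (n : ℝ)) :=
        le_min le_rfl (by
          rw [← ENNReal.ofReal_toReal h]
          exact ENNReal.ofReal_le_ofReal hn)
      exact hle.trans (le_iSup (fun n : ℕ => min (W.rnDeriv Q x) (ENNReal.ofReal (n : ℝ))) n)
  have hmono_nat : Monotone fun n : ℕ =>
      fun x => min (W.rnDeriv Q x) (ENNReal.ofReal (n : ℝ)) := by
    intro m n hmn x
    exact min_le_min le_rfl (ENNReal.ofReal_le_ofReal (by exact_mod_cast hmn))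
  have hswap := lintegral_iSup (μ := Q)
    (f := fun n x => min (W.rnDeriv Q x) (ENNReal.ofReal (n : ℝ)))
    (fun n => hL.min measurable_const) hmono_nat
  have hnat : (⨆ n : ℕ, F W Q (n : ℝ)) = ∫⁻ x, W.rnDeriv Q x ∂Q := by
    calc (⨆ n : ℕ, F W Q (n : ℝ))
        = ⨆ n : ℕ, ∫⁻ x, min (W.rnDeriv Q x) (ENNReal.ofReal (n : ℝ)) ∂Q := rfl
      _ = ∫⁻ x, ⨆ n : ℕ, min (W.rnDeriv Q x) (ENNReal.ofReal (n : ℝ)) ∂Q := hswap.symm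
      _ = ∫⁻ x, W.rnDeriv Q x ∂Q := by
          congr 1
          funext x
          exact hsup x
  rw [hT]
  apply le_antisymm
  · exact iSup_le fun γ => lintegral_mono fun x => min_le_left _ _
  · rw [← hnat]
    exact iSup_le fun n => le_iSup (fun γ : ℝ => F W Q γ) ((n : ℝ))

end EntSpecAux


open EntSpecAux in
/-- Under `η(1) < ∞`, the entropy spectrum `γ ↦ η(γ)` on `[0,∞)` is nondecreasing,
finite-valued, continuous and concave, has left derivative `Q({L ≥ γ})` and right
derivative `Q({L > γ})` at every `γ > 0` (where `L = dW̃/dQ` is the likelihood ratio),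
and `η(γ) → ‖W̃‖` as `γ → ∞`, where `W̃` is the `Q`-absolutely-continuous component
of `W`. -/
theorem entropy_spectrum_properties
    (W Q ρ : Measure Ω) [SigmaFinite W] [SigmaFinite Q] [SigmaFinite ρ]
    (hW : W ≪ ρ) (hQ : Q ≪ ρ)
    (h1 : entSpec W Q ρ 1 ≠ ⊤) :
    MonotoneOn (fun γ => (entSpec W Q ρ γ).toReal) (Set.Ici 0) ∧
    (∀ γ : ℝ, 0 ≤ γ → entSpec W Q ρ γ ≠ ⊤) ∧
    ContinuousOn (fun γ => (entSpec W Q ρ γ).toReal) (Set.Ici 0) ∧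
    ConcaveOn ℝ (Set.Ici 0) (fun γ => (entSpec W Q ρ γ).toReal) ∧
    (∀ γ : ℝ, 0 < γ →
      HasDerivWithinAt (fun γ => (entSpec W Q ρ γ).toReal)
        ((Q {x | ENNReal.ofReal γ ≤ W.rnDeriv Q x}).toReal) (Set.Iio γ) γ) ∧
    (∀ γ : ℝ, 0 < γ →
      HasDerivWithinAt (fun γ => (entSpec W Q ρ γ).toReal)
        ((Q {x | ENNReal.ofReal γ < W.rnDeriv Q x}).toReal) (Set.Ioi γ) γ) ∧
    Tendsto (fun γ => entSpec W Q ρ γ) atTop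
      (𝓝 (Q.withDensity (W.rnDeriv Q) Set.univ)) := by
  have hE : ∀ γ : ℝ, entSpec W Q ρ γ = F W Q γ := entSpec_eq_F W Q ρ hQ
  have h1' : F W Q 1 ≠ ⊤ := hE 1 ▸ h1
  have hL : Measurable (W.rnDeriv Q) := Measure.measurable_rnDeriv W Q
  simp only [hE]
  refine ⟨?_, ?_, ?_, ?_, ?_, ?_, ?_⟩
  · -- monotone
    intro a _ b _ hab
    exact ENNReal.toReal_mono (F_ne_top W Q h1' b) (F_mono W Q hab)
  · -- finite
    exact fun γ _ => F_ne_top W Q h1' γ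
  · -- continuous
    intro γ hγ
    rcases eq_or_lt_of_le (show (0:ℝ) ≤ γ from hγ) with h0 | h0
    · subst h0
      have htend := tendsto_F_zero W Q h1'
      have : Tendsto (fun y => (F W Q y).toReal) (𝓝[≥] (0:ℝ)) (𝓝 ((0:ℝ≥0∞)).toReal) :=
        (ENNReal.tendsto_toReal (by simp)).comp htend
      simpa [ContinuousWithinAt, F_zero W Q] using this
    · have hd1 := hasDerivWithinAt_F_Iio W Q h1' h0
      have hd2 := hasDerivWithinAt_F_Ioi W Q h1' h0
      have hc : ContinuousAt (fun y => (F W Q y).toReal) γ := by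
        rw [← continuousWithinAt_compl_self, ← Iio_union_Ioi]
        exact hd1.continuousWithinAt.union hd2.continuousWithinAt
      exact hc.continuousWithinAt
  · -- concave
    refine ⟨convex_Ici 0, fun x hx y hy a b ha hb hab => ?_⟩
    have hx0 : (0:ℝ) ≤ x := hx
    have hy0 : (0:ℝ) ≤ y := hy
    have key : ENNReal.ofReal a * F W Q x + ENNReal.ofReal b * F W Q y
        ≤ F W Q (a * x + b * y) := by
      have e1 : ENNReal.ofReal a * F W Q x
          = ∫⁻ z, ENNReal.ofReal a * min (W.rnDeriv Q z) (ENNReal.ofReal x) ∂Q :=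
        (lintegral_const_mul _ (hL.min measurable_const)).symm
      have e2 : ENNReal.ofReal b * F W Q y
          = ∫⁻ z, ENNReal.ofReal b * min (W.rnDeriv Q z) (ENNReal.ofReal y) ∂Q :=
        (lintegral_const_mul _ (hL.min measurable_const)).symm
      rw [e1, e2, ← lintegral_add_left ((hL.min measurable_const).const_mul _)]
      refine lintegral_mono fun z => ?_
      have hsum : ENNReal.ofReal (a * x + b * y)
          = ENNReal.ofReal a * ENNReal.ofReal x + ENNReal.ofReal b * ENNReal.ofReal y := by
        rw [ENNReal.ofReal_add (mul_nonneg ha hx0) (mul_nonneg hb hy0),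
          ENNReal.ofReal_mul ha, ENNReal.ofReal_mul hb]
      have hab1 : ENNReal.ofReal a + ENNReal.ofReal b = 1 := by
        rw [← ENNReal.ofReal_add ha hb, hab, ENNReal.ofReal_one]
      rcases le_total (ENNReal.ofReal (a * x + b * y)) (W.rnDeriv Q z) with h | h
      · rw [min_eq_right h]
        calc ENNReal.ofReal a * min (W.rnDeriv Q z) (ENNReal.ofReal x)
              + ENNReal.ofReal b * min (W.rnDeriv Q z) (ENNReal.ofReal y)
            ≤ ENNReal.ofReal a * ENNReal.ofReal x + ENNReal.ofReal b * ENNReal.ofReal y :=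
              add_le_add (mul_le_mul_right (min_le_right _ _) _)
                (mul_le_mul_right (min_le_right _ _) _)
          _ = ENNReal.ofReal (a * x + b * y) := hsum.symm
      · rw [min_eq_left h]
        calc ENNReal.ofReal a * min (W.rnDeriv Q z) (ENNReal.ofReal x)
              + ENNReal.ofReal b * min (W.rnDeriv Q z) (ENNReal.ofReal y)
            ≤ ENNReal.ofReal a * W.rnDeriv Q z + ENNReal.ofReal b * W.rnDeriv Q z :=
              add_le_add (mul_le_mul_right (min_le_left _ _) _)
                (mul_le_mul_right (min_le_left _ _) _)
          _ = (ENNReal.ofReal a + ENNReal.ofReal b) * W.rnDeriv Q z := (add_mul _ _ _).symm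
          _ = W.rnDeriv Q z := by rw [hab1, one_mul]
    have hto := ENNReal.toReal_mono (F_ne_top W Q h1' _) key
    rw [ENNReal.toReal_add (ENNReal.mul_ne_top ENNReal.ofReal_ne_top (F_ne_top W Q h1' x))
        (ENNReal.mul_ne_top ENNReal.ofReal_ne_top (F_ne_top W Q h1' y)),
      ENNReal.toReal_mul, ENNReal.toReal_mul, ENNReal.toReal_ofReal ha,
      ENNReal.toReal_ofReal hb] at hto
    simpa [smul_eq_mul] using hto
  · -- left derivative
    exact fun γ hγ => hasDerivWithinAt_F_Iio W Q h1' hγ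
  · -- right derivative
    exact fun γ hγ => hasDerivWithinAt_F_Ioi W Q h1' hγ
  · -- limit at infinity
    rw [← F_iSup W Q]
    exact tendsto_atTop_iSup (F_mono W Q)
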